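/- Vandermonde's summation: for a nonnegative integer n and parameters a, c (with c avoiding nonpositive integers ≥ -(n-1)), the terminating hypergeometric sum ∑_{k=0}^{n} ((a)_k (-n)_k)/((c)_k k!) equals (c-a)_n / (c)_n, where (x)_k denotes the rising factorial x(x+1)···(x+k-1). -/

import Mathlib

/-- The rising factorial `(x)_k = x(x+1)⋯(x+k-1)`. -/
def rf (x : ℚ) (k : ℕ) : ℚ := ∏ i ∈ Finset.range k, (x + i)

lemma rf_zero (x : ℚ) : rf x 0 = 1 := by simp [rf]

lemma rf_succ (x : ℚ) (k : ℕ) : rf x (k + 1) = rf x k * (x + k) := by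
  simp [rf, Finset.prod_range_succ]

lemma rf_succ' (x : ℚ) (k : ℕ) : rf x (k + 1) = x * rf (x + 1) k := by
  rw [rf, Finset.prod_range_succ', rf]
  simp only [Nat.cast_zero, add_zero, mul_comm]
  congr 1
  apply Finset.prod_congr rfl
  intro i _
  push_cast
  ring

lemma rf_add (x : ℚ) (k m : ℕ) : rf x (k + m) = rf x k * rf (x + k) m := by
  rw [rf, rf, rf, Finset.prod_range_add]
  congr 1
  apply Finset.prod_congr rfl
  intro i _
  push_cast
  ring

lemma rf_neg_nat (n k : ℕ) (h : k ≤ n) :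
    rf (-(n : ℚ)) k = (-1) ^ k * (n.descFactorial k : ℚ) := by
  induction k with
  | zero => simp [rf_zero]
  | succ k ih =>
    have hk : k ≤ n := Nat.le_of_succ_le h
    have hk' : k < n := h
    rw [rf_succ, ih hk, Nat.descFactorial_succ]
    have : ((n - k : ℕ) : ℚ) = (n : ℚ) - k := by
      push_cast [Nat.cast_sub hk]; ring
    push_cast [this]
    ring

lemma rf_ne_zero (n : ℕ) (c : ℚ) (hc : ∀ k : ℕ, k < n → c + k ≠ 0)
    (k : ℕ) (h : k ≤ n) : rf c k ≠ 0 := by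
  rw [rf, Finset.prod_ne_zero_iff]
  intro i hi
  exact hc i (lt_of_lt_of_le (Finset.mem_range.mp hi) h)

lemma key (n : ℕ) : ∀ a c : ℚ,
    ∑ k ∈ Finset.range (n + 1),
      (n.choose k : ℚ) * (-1) ^ k * rf a k * rf (c + k) (n - k) = rf (c - a) n := by
  induction n with
  | zero => intro a c; simp [rf_zero]
  | succ n ih =>
    intro a c
    rw [Finset.sum_range_succ']
    have h0 : ((n+1).choose 0 : ℚ) * (-1) ^ 0 * rf a 0 * rf (c + (0:ℕ)) (n + 1 - 0)
        = rf c (n + 1) := by simp [rf_zero]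
    rw [h0]
    have hsplit : ∀ k ∈ Finset.range (n + 1),
        ((n+1).choose (k+1) : ℚ) * (-1) ^ (k+1) * rf a (k+1) * rf (c + (k+1:ℕ)) (n + 1 - (k+1))
        = (-a) * ((n.choose k : ℚ) * (-1) ^ k * rf (a+1) k * rf ((c+1) + k) (n - k))
          + ((n.choose (k+1) : ℚ) * (-1) ^ (k+1) * rf a (k+1) * rf (c + (k+1:ℕ)) (n - k)) := by
      intro k hk
      rw [Nat.succ_sub_succ, Nat.choose_succ_succ, rf_succ']
      push_cast
      have : (c : ℚ) + (k + 1) = (c + 1) + k := by ring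
      rw [this]
      ring
    rw [Finset.sum_congr rfl hsplit, Finset.sum_add_distrib, ← Finset.mul_sum, ih (a+1) (c+1)]
    have hc1 : (c + 1) - (a + 1) = c - a := by ring
    rw [hc1]
    -- second sum plus rf c (n+1) equals (c+n) * rf (c-a) n
    have h2 : (∑ k ∈ Finset.range (n + 1),
        (n.choose (k+1) : ℚ) * (-1) ^ (k+1) * rf a (k+1) * rf (c + (k+1:ℕ)) (n - k))
        + rf c (n + 1)
        = ∑ k ∈ Finset.range (n + 2),
            (n.choose k : ℚ) * (-1) ^ k * rf a k * rf (c + k) (n + 1 - k) := by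
      conv_rhs => rw [Finset.sum_range_succ']
      congr 1
      · apply Finset.sum_congr rfl
        intro k hk
        rw [Nat.succ_sub_succ]
      · simp [rf_zero]
    have h3 : ∑ k ∈ Finset.range (n + 2),
            (n.choose k : ℚ) * (-1) ^ k * rf a k * rf (c + k) (n + 1 - k)
        = (c + n) * rf (c - a) n := by
      rw [Finset.sum_range_succ]
      have hlast : (n.choose (n+1) : ℚ) = 0 := by
        simp [Nat.choose_eq_zero_of_lt]
      rw [hlast]
      simp only [zero_mul, add_zero]
      rw [← ih a c, Finset.mul_sum]
      apply Finset.sum_congr rfl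
      intro k hk
      have hk' : k ≤ n := Nat.lt_succ_iff.mp (Finset.mem_range.mp hk)
      have : n + 1 - k = (n - k) + 1 := by omega
      rw [this, rf_succ]
      have : (c + k) + ((n - k : ℕ) : ℚ) = c + n := by
        push_cast [Nat.cast_sub hk']; ring
      rw [this]
      ring
    rw [add_assoc, h2, h3, rf_succ]
    ring

theorem chu_vandermonde (n : ℕ) (a c : ℚ) (hc : ∀ k : ℕ, k < n → c + k ≠ 0) :
    ∑ k ∈ Finset.range (n + 1),
        rf a k * rf (-(n : ℚ)) k / (rf c k * (Nat.factorial k : ℚ)) =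
      rf (c - a) n / rf c n := by
  have hcn : rf c n ≠ 0 := rf_ne_zero n c hc n le_rfl
  rw [← key n a c, Finset.sum_div]
  apply Finset.sum_congr rfl
  intro k hk
  have hk' : k ≤ n := Nat.lt_succ_iff.mp (Finset.mem_range.mp hk)
  have hck : rf c k ≠ 0 := rf_ne_zero n c hc k hk'
  have hfact : (Nat.factorial k : ℚ) ≠ 0 := by positivity
  rw [rf_neg_nat n k hk']
  have hdesc : (n.descFactorial k : ℚ) = (Nat.factorial k : ℚ) * (n.choose k : ℚ) := by
    rw [← Nat.cast_mul, Nat.descFactorial_eq_factorial_mul_choose]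
  have hcsplit : rf c n = rf c k * rf (c + k) (n - k) := by
    rw [← rf_add]; congr 1; omega
  have hck2 : rf (c + k) (n - k) ≠ 0 := by
    rw [rf, Finset.prod_ne_zero_iff]
    intro i hi
    have hi' : k + i < n := by
      have := Finset.mem_range.mp hi; omega
    have := hc (k + i) hi'
    push_cast at this ⊢
    intro h; apply this; linarith
  rw [hdesc, hcsplit]
  field_simp
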